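/- arXiv:1907.12851 — 4 statements merged into one kernel-verified Lean document; each statement's English description precedes it below -/
import Mathlib

section
/- For every natural number n ≥ 1, 1 − (Nat.choose (2n−2) n) / (Nat.choose (2n−1) n) = n/(2n−1) as rational numbers, and the sequence n/(2n−1) tends to 1/2 as n → ∞. (This is the paper's Lemma 2: under bootstrap resampling with replacement without ordering — i.e., choosing a uniformly random multiset of size n from n observations — the probability that a fixed observation appears in the bootstrap replicate equals n/(2n−1) ≅ 1/2, since there are C(2n−1, n) multisets of size n from n types and C(2n−2, n) of them avoid the fixed observation.) -/
open Filter

lemma key_nat (n : ℕ) (hn : 1 ≤ n) :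
    (2*n - 1) * Nat.choose (2*n - 2) n = (n - 1) * Nat.choose (2*n - 1) n := by
  obtain ⟨m, rfl⟩ := Nat.exists_eq_add_of_le hn
  have h2 : 2 * (1 + m) - 2 = 2 * m := by omega
  have h1 : 2 * (1 + m) - 1 = 2 * m + 1 := by omega
  rw [h1, h2]
  have hA := Nat.add_one_mul_choose_eq (2*m) m
  -- (2m+1) * C(2m, m) = C(2m+1, m+1) * (m+1)
  have hB := Nat.choose_succ_right_eq (2*m) m
  -- C(2m, m+1) * (m+1) = C(2m, m) * (2m - m)
  have h3 : 2*m - m = m := by omega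
  rw [h3] at hB
  have h4 : 1 + m - 1 = m := by omega
  rw [h4]
  -- goal: (2m+1) * C(2m, 1+m) = m * C(2m+1, 1+m)
  have h5 : 1 + m = m + 1 := by omega
  rw [h5]
  apply Nat.eq_of_mul_eq_mul_left (Nat.succ_pos m)
  calc (m+1) * ((2*m+1) * Nat.choose (2*m) (m+1))
        = (2*m+1) * (Nat.choose (2*m) (m+1) * (m+1)) := by ring
      _ = (2*m+1) * (Nat.choose (2*m) m * m) := by rw [hB]
      _ = ((2*m).succ * Nat.choose (2*m) m) * m := by rw [Nat.succ_eq_add_one]; ring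
      _ = (Nat.choose (2*m+1) (m+1) * (m+1)) * m := by rw [hA]
      _ = (m+1) * (m * Nat.choose (2*m+1) (m+1)) := by ring

/-- Under bootstrap resampling with replacement without ordering (a uniformly random
multiset of size `n` from `n` observations), the probability that a fixed observation
appears in the replicate is `1 − C(2n−2, n)/C(2n−1, n) = n/(2n−1)`, which tends to
`1/2` as `n → ∞`. -/
theorem bootstrap_without_ordering_half :
    (∀ n : ℕ, 1 ≤ n →
      (1 : ℚ) - (Nat.choose (2*n - 2) n : ℚ) / (Nat.choose (2*n - 1) n : ℚ)
        = (n : ℚ) / (2*n - 1)) ∧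
    Tendsto (fun n : ℕ => (n : ℝ) / (2*n - 1)) atTop (nhds (1/2)) := by
  constructor
  · intro n hn
    have hpos : 0 < Nat.choose (2*n - 1) n := Nat.choose_pos (by omega)
    have hC : ((Nat.choose (2*n - 1) n : ℚ)) ≠ 0 := by positivity
    have h2n : ((2:ℚ)*n - 1) ≠ 0 := by
      have : (1:ℚ) ≤ n := by exact_mod_cast hn
      nlinarith
    have key := key_nat n hn
    have keyQ : ((2:ℚ)*n - 1) * (Nat.choose (2*n - 2) n : ℚ)
        = ((n:ℚ) - 1) * (Nat.choose (2*n - 1) n : ℚ) := by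
      have := congrArg (fun x : ℕ => (x : ℚ)) key
      push_cast [Nat.cast_sub hn, Nat.cast_sub (show 1 ≤ 2*n by omega)] at this
      convert this using 2
    field_simp
    rw [eq_div_iff (by contrapose! h2n; linarith)]
    nlinarith [keyQ]
  · have h : Tendsto (fun n : ℕ => (1:ℝ) / (2 - 1/n)) atTop (nhds (1/2)) := by
      have h1 : Tendsto (fun n : ℕ => (2:ℝ) - 1/n) atTop (nhds 2) := by
        have : Tendsto (fun n : ℕ => 1 / (n : ℝ)) atTop (nhds 0) := tendsto_one_div_atTop_nhds_zero_nat
        simpa using (tendsto_const_nhds (x := (2:ℝ)) (f := atTop)).sub this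
      have := h1.inv₀ (by norm_num)
      simpa [one_div] using this
    apply h.congr'
    filter_upwards [eventually_ge_atTop 1] with n hn
    have hn' : (n:ℝ) ≠ 0 := by positivity
    field_simp
end

section
/- Let μ and ν be probability measures on ℝ, and let X : Fin n₁ → Ω → ℝ and Y : Fin n₂ → Ω → ℝ be random variables on a probability space Ω such that the joint family (X_1,…,X_{n₁},Y_1,…,Y_{n₂}) is independent, each X_i has law μ, and each Y_j has law ν. Then the Mann–Whitney statistic Û = (1/(n₁n₂)) Σ_i Σ_j ψ(X_i, Y_j) satisfies E[Û] = ∫∫ ψ(x,y) d(μ.prod ν)(x,y) = (μ.prod ν){(x,y) : y < x} + (1/2)·(μ.prod ν){(x,y) : x = y}. (This is the unbiasedness of the Mann–Whitney statistic as an estimator of the population AUC Pr[h(X)|ω₂ < h(X)|ω₁].) -/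
open MeasureTheory ProbabilityTheory Finset

/-- The Mann–Whitney kernel. -/
noncomputable def psi (a b : ℝ) : ℝ := if a > b then 1 else if a = b then 1/2 else 0

lemma psi_meas : Measurable (fun p : ℝ × ℝ => psi p.1 p.2) := by
  unfold psi
  exact Measurable.ite (measurableSet_lt measurable_snd measurable_fst) measurable_const
    (Measurable.ite (measurableSet_eq_fun measurable_fst measurable_snd) measurable_const
      measurable_const)

lemma psi_abs_le (a b : ℝ) : ‖psi a b‖ ≤ 1 := by
  unfold psi
  split_ifs <;> simp <;> norm_num

/-- Unbiasedness of the Mann–Whitney statistic: if `X₁,…,X_{n₁},Y₁,…,Y_{n₂}` are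
jointly independent with the `Xᵢ` distributed as `μ` and the `Yⱼ` as `ν`, then the
expectation of the Mann–Whitney statistic equals `∫∫ ψ d(μ × ν)`, which equals
`Pr[Y < X] + (1/2)·Pr[X = Y]` (the population AUC). -/
theorem mann_whitney_unbiased {Ω : Type*} [MeasurableSpace Ω]
    (P : Measure Ω) [IsProbabilityMeasure P]
    (μ ν : Measure ℝ) [IsProbabilityMeasure μ] [IsProbabilityMeasure ν]
    (n₁ n₂ : ℕ) (h₁ : 1 ≤ n₁) (h₂ : 1 ≤ n₂)
    (X : Fin n₁ → Ω → ℝ) (Y : Fin n₂ → Ω → ℝ)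
    (hmX : ∀ i, Measurable (X i)) (hmY : ∀ j, Measurable (Y j))
    (hindep : iIndepFun
      (Sum.elim X Y) P)
    (hX : ∀ i, Measure.map (X i) P = μ) (hY : ∀ j, Measure.map (Y j) P = ν) :
    ∫ ω, (1 / ((n₁ : ℝ) * n₂)) * ∑ i : Fin n₁, ∑ j : Fin n₂, psi (X i ω) (Y j ω) ∂P
        = ∫ p : ℝ × ℝ, psi p.1 p.2 ∂(μ.prod ν) ∧
      ∫ p : ℝ × ℝ, psi p.1 p.2 ∂(μ.prod ν)
        = ((μ.prod ν) {p : ℝ × ℝ | p.2 < p.1}).toReal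
            + (1/2) * ((μ.prod ν) {p : ℝ × ℝ | p.1 = p.2}).toReal := by
  have hψm := psi_meas
  have hint : ∀ (i : Fin n₁) (j : Fin n₂),
      Integrable (fun ω => psi (X i ω) (Y j ω)) P := fun i j =>
    (integrable_const (1 : ℝ)).mono'
      ((hψm.comp ((hmX i).prodMk (hmY j))).aestronglyMeasurable)
      (Filter.Eventually.of_forall fun ω => psi_abs_le _ _)
  have key : ∀ (i : Fin n₁) (j : Fin n₂),
      ∫ ω, psi (X i ω) (Y j ω) ∂P = ∫ p : ℝ × ℝ, psi p.1 p.2 ∂(μ.prod ν) := by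
    intro i j
    have hind : IndepFun (X i) (Y j) P := by
      have := hindep.indepFun (i := Sum.inl i) (j := Sum.inr j) (by simp)
      simpa using this
    have hmap : Measure.map (fun ω => (X i ω, Y j ω)) P = μ.prod ν := by
      rw [(indepFun_iff_map_prod_eq_prod_map_map (hmX i).aemeasurable
        (hmY j).aemeasurable).mp hind, hX i, hY j]
    rw [← hmap, integral_map ((hmX i).prodMk (hmY j)).aemeasurable
      hψm.aestronglyMeasurable]
  constructor
  · rw [integral_const_mul,
      integral_finset_sum _ (fun i _ => integrable_finset_sum _ (fun j _ => hint i j))]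
    have : ∀ i ∈ Finset.univ (α := Fin n₁),
        ∫ ω, ∑ j : Fin n₂, psi (X i ω) (Y j ω) ∂P
          = ∑ j : Fin n₂, ∫ p : ℝ × ℝ, psi p.1 p.2 ∂(μ.prod ν) := by
      intro i _
      rw [integral_finset_sum _ (fun j _ => hint i j)]
      exact Finset.sum_congr rfl fun j _ => key i j
    rw [Finset.sum_congr rfl this]
    simp only [Finset.sum_const, Finset.card_univ, Fintype.card_fin, nsmul_eq_mul]
    have hn₁ : (n₁ : ℝ) ≠ 0 := Nat.cast_ne_zero.mpr (by omega)
    have hn₂ : (n₂ : ℝ) ≠ 0 := Nat.cast_ne_zero.mpr (by omega)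
    field_simp
  · have hdecomp : ∀ p : ℝ × ℝ, psi p.1 p.2 =
        Set.indicator {q : ℝ × ℝ | q.2 < q.1} (fun _ => (1:ℝ)) p
          + Set.indicator {q : ℝ × ℝ | q.1 = q.2} (fun _ => (1/2:ℝ)) p := by
      intro p
      unfold psi
      rcases lt_trichotomy p.2 p.1 with h | h | h
      · simp [Set.indicator, h, h.ne']
      · simp [Set.indicator, h.symm, lt_irrefl]
      · simp [Set.indicator, h, h.ne, not_lt.mpr h.le, lt_asymm h]
    have hs₁ : MeasurableSet {q : ℝ × ℝ | q.2 < q.1} :=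
      measurableSet_lt measurable_snd measurable_fst
    have hs₂ : MeasurableSet {q : ℝ × ℝ | q.1 = q.2} :=
      measurableSet_eq_fun measurable_fst measurable_snd
    calc ∫ p : ℝ × ℝ, psi p.1 p.2 ∂(μ.prod ν)
        = ∫ p : ℝ × ℝ, (Set.indicator {q : ℝ × ℝ | q.2 < q.1} (fun _ => (1:ℝ)) p
            + Set.indicator {q : ℝ × ℝ | q.1 = q.2} (fun _ => (1/2:ℝ)) p) ∂(μ.prod ν) := by
          exact integral_congr_ae (Filter.Eventually.of_forall hdecomp)
      _ = ((μ.prod ν) {q : ℝ × ℝ | q.2 < q.1}).toReal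
            + (1/2) * ((μ.prod ν) {q : ℝ × ℝ | q.1 = q.2}).toReal := by
          rw [integral_add
            ((integrable_const (1:ℝ)).indicator hs₁)
            ((integrable_const ((1:ℝ)/2)).indicator hs₂),
            integral_indicator_const _ hs₁, integral_indicator_const _ hs₂]
          simp [mul_comm, Measure.real]
end

section
/- Let n ≥ 1, let α : Fin n → ℝ, let ᾱ = (1/n) Σ_i α i, and let μ ∈ ℝ. If f is drawn uniformly at random from all functions Fin n → Fin n (an ordered bootstrap replicate) and s*(f) = μ + (1/n) Σ_{k : Fin n} α (f k) is the linear statistic evaluated on the bootstrap replicate, then the variance of s*(f) equals (1/n²) Σ_i (α i − ᾱ)². (This is the ideal bootstrap variance of a linear statistic.) -/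
open Finset

lemma sum_eval_one {n : ℕ} (k0 : Fin n) (φ : Fin n → ℝ) :
    ∑ f : Fin n → Fin n, φ (f k0) = (n:ℝ)^(n-1) * ∑ i, φ i := by
  calc ∑ f : Fin n → Fin n, φ (f k0)
      = ∑ f : Fin n → Fin n, ∏ k, (if k = k0 then φ (f k) else 1) := by
        refine Finset.sum_congr rfl fun f _ => ?_
        rw [Finset.prod_ite_eq' Finset.univ k0 (fun k => φ (f k))]
        simp
    _ = ∏ k : Fin n, ∑ j : Fin n, (if k = k0 then φ j else 1) := by
        rw [Fintype.prod_sum (fun k j => if k = k0 then φ j else (1:ℝ))]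
    _ = (n:ℝ)^(n-1) * ∑ i, φ i := by
        rw [← Finset.mul_prod_erase Finset.univ _ (Finset.mem_univ k0)]
        rw [Finset.prod_congr rfl (fun k hk => by simp [Finset.ne_of_mem_erase hk] :
          ∀ k ∈ Finset.univ.erase k0, (∑ j : Fin n, if k = k0 then φ j else (1:ℝ)) = (n:ℝ))]
        simp [Finset.prod_const, Finset.card_erase_of_mem, mul_comm]

lemma sum_eval_two {n : ℕ} {k0 l0 : Fin n} (h : k0 ≠ l0) (φ ψ : Fin n → ℝ) :
    ∑ f : Fin n → Fin n, φ (f k0) * ψ (f l0)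
      = (n:ℝ)^(n-2) * ((∑ i, φ i) * (∑ i, ψ i)) := by
  have key : ∀ f : Fin n → Fin n,
      φ (f k0) * ψ (f l0) = ∏ k, (if k = k0 then φ (f k) else if k = l0 then ψ (f k) else 1) := by
    intro f
    rw [← Finset.mul_prod_erase Finset.univ _ (Finset.mem_univ k0), if_pos rfl]
    have hl : l0 ∈ Finset.univ.erase k0 := Finset.mem_erase.2 ⟨h.symm, Finset.mem_univ _⟩
    rw [← Finset.mul_prod_erase _ _ hl, if_neg (Ne.symm h), if_pos rfl]
    rw [Finset.prod_congr rfl (fun k hk => by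
      have h1 : k ≠ l0 := Finset.ne_of_mem_erase hk
      have h2 : k ≠ k0 := Finset.ne_of_mem_erase (Finset.mem_of_mem_erase hk)
      simp [h1, h2] :
      ∀ k ∈ (Finset.univ.erase k0).erase l0,
        (if k = k0 then φ (f k) else if k = l0 then ψ (f k) else (1:ℝ)) = 1)]
    simp [mul_assoc]
  calc ∑ f : Fin n → Fin n, φ (f k0) * ψ (f l0)
      = ∑ f : Fin n → Fin n, ∏ k, (if k = k0 then φ (f k) else if k = l0 then ψ (f k) else 1) :=
        Finset.sum_congr rfl fun f _ => key f
    _ = ∏ k : Fin n, ∑ j : Fin n, (if k = k0 then φ j else if k = l0 then ψ j else 1) := by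
        rw [Fintype.prod_sum (fun k j => if k = k0 then φ j else if k = l0 then ψ j else (1:ℝ))]
    _ = (n:ℝ)^(n-2) * ((∑ i, φ i) * (∑ i, ψ i)) := by
        rw [← Finset.mul_prod_erase Finset.univ _ (Finset.mem_univ k0)]
        have hl : l0 ∈ Finset.univ.erase k0 := Finset.mem_erase.2 ⟨h.symm, Finset.mem_univ _⟩
        rw [← Finset.mul_prod_erase _ _ hl]
        rw [Finset.prod_congr rfl (fun k hk => by
          have h1 : k ≠ l0 := Finset.ne_of_mem_erase hk
          have h2 : k ≠ k0 := Finset.ne_of_mem_erase (Finset.mem_of_mem_erase hk)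
          simp [h1, h2] :
          ∀ k ∈ (Finset.univ.erase k0).erase l0,
            (∑ j : Fin n, if k = k0 then φ j else if k = l0 then ψ j else (1:ℝ)) = (n:ℝ))]
        simp [Ne.symm h]
        simp [Finset.prod_const, Finset.card_erase_of_mem, mul_comm, mul_left_comm, mul_assoc, Nat.sub_sub]

/-- The ideal bootstrap variance of a linear statistic
`s*(f) = μ + (1/n) Σ_k α(f k)`, where `f` is uniform over all `n^n` ordered
bootstrap replicates `Fin n → Fin n`, equals `(1/n²) Σᵢ (αᵢ − ᾱ)²`. -/
theorem bootstrap_variance_linear_statistic (n : ℕ) (hn : 1 ≤ n)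
    (α : Fin n → ℝ) (μ : ℝ) (αbar : ℝ) (hαbar : αbar = (1 / (n : ℝ)) * ∑ i, α i)
    (s : (Fin n → Fin n) → ℝ)
    (hs : ∀ f : Fin n → Fin n, s f = μ + (1 / (n : ℝ)) * ∑ k : Fin n, α (f k))
    (sbar : ℝ) (hsbar : sbar = (1 / (n : ℝ)^n) * ∑ f : Fin n → Fin n, s f) :
    (1 / (n : ℝ)^n) * ∑ f : Fin n → Fin n, (s f - sbar)^2
      = (1 / (n : ℝ)^2) * ∑ i : Fin n, (α i - αbar)^2 := by

  have hn0 : (n:ℝ) ≠ 0 := Nat.cast_ne_zero.2 (by omega)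
  have hpow : (n:ℝ)^(n-1) * (n:ℝ) = (n:ℝ)^n := by
    rw [← pow_succ]
    congr 1
    omega
  set β : Fin n → ℝ := fun i => α i - αbar with hβ
  have hβsum : ∑ i, β i = 0 := by
    simp only [hβ, Finset.sum_sub_distrib, Finset.sum_const, Finset.card_univ,
      Fintype.card_fin, nsmul_eq_mul, hαbar]
    field_simp
    ring
  -- mean of s
  have hcard : (Fintype.card (Fin n → Fin n) : ℝ) = (n:ℝ)^n := by
    simp [Fintype.card_fun]
  have hmean : sbar = μ + αbar := by
    rw [hsbar]
    have h1 : ∑ f : Fin n → Fin n, s f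
        = (n:ℝ)^n * μ + (1/(n:ℝ)) * ∑ k : Fin n, ∑ f : Fin n → Fin n, α (f k) := by
      simp only [hs]
      rw [Finset.sum_add_distrib, Finset.sum_const, Finset.card_univ, Fintype.card_fun,
        ← Finset.mul_sum, Finset.sum_comm]
      simp [Fintype.card_fin]
    rw [h1]
    have h2 : ∑ k : Fin n, ∑ f : Fin n → Fin n, α (f k)
        = (n:ℝ) * ((n:ℝ)^(n-1) * ∑ i, α i) := by
      rw [Finset.sum_congr rfl (fun k _ => sum_eval_one k α), Finset.sum_const]
      simp [Finset.card_univ, mul_comm]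
    rw [h2, hαbar]
    have hpow' : (n:ℝ) * (n:ℝ)^(n-1) = (n:ℝ)^n := by rw [mul_comm]; exact hpow
    field_simp
    ring_nf
    rw [hpow']
  -- centered statistic
  have hcent : ∀ f : Fin n → Fin n, s f - sbar = (1/(n:ℝ)) * ∑ k : Fin n, β (f k) := by
    intro f
    rw [hs f, hmean, hβ]
    simp only [Finset.sum_sub_distrib, Finset.sum_const, Finset.card_univ, Fintype.card_fin,
      nsmul_eq_mul]
    have h3 : (1/(n:ℝ)) * ((n:ℝ) * αbar) = αbar := by field_simp
    rw [mul_sub, h3]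
    ring
  -- the second moment
  have hsq : ∑ f : Fin n → Fin n, (∑ k : Fin n, β (f k))^2 = (n:ℝ)^n * ∑ i, (β i)^2 := by
    have expand : ∀ f : Fin n → Fin n,
        (∑ k : Fin n, β (f k))^2 = ∑ k : Fin n, ∑ l : Fin n, β (f k) * β (f l) := by
      intro f
      rw [sq, Finset.sum_mul_sum]
    calc ∑ f : Fin n → Fin n, (∑ k : Fin n, β (f k))^2
        = ∑ k : Fin n, ∑ l : Fin n, ∑ f : Fin n → Fin n, β (f k) * β (f l) := by
          rw [Finset.sum_congr rfl (fun f _ => expand f)]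
          rw [Finset.sum_comm]
          exact Finset.sum_congr rfl fun k _ => Finset.sum_comm
      _ = ∑ k : Fin n, (n:ℝ)^(n-1) * ∑ i, (β i)^2 := by
          refine Finset.sum_congr rfl fun k _ => ?_
          rw [Finset.sum_eq_single k]
          · rw [sum_eval_one k (fun i => β i * β i)]
            simp [sq]
          · intro l _ hlk
            rw [sum_eval_two (Ne.symm hlk) β β, hβsum]
            ring
          · simp
      _ = (n:ℝ)^n * ∑ i, (β i)^2 := by
          rw [Finset.sum_const, Finset.card_univ, Fintype.card_fin, nsmul_eq_mul, ← hpow]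
          ring
  calc (1 / (n : ℝ)^n) * ∑ f : Fin n → Fin n, (s f - sbar)^2
      = (1 / (n : ℝ)^n) * ∑ f : Fin n → Fin n, (1/(n:ℝ))^2 * (∑ k : Fin n, β (f k))^2 := by
        congr 1
        exact Finset.sum_congr rfl fun f _ => by rw [hcent f, mul_pow]
    _ = (1 / (n : ℝ)^n) * ((1/(n:ℝ))^2 * ((n:ℝ)^n * ∑ i, (β i)^2)) := by
        rw [← Finset.mul_sum, hsq]
    _ = (1 / (n : ℝ)^2) * ∑ i : Fin n, (α i - αbar)^2 := by
        field_simp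
        simp only [hβ]
end

section
/- Let n ≥ 2, let α : Fin n → ℝ, let ᾱ = (1/n) Σ_i α i, and let μ ∈ ℝ. For the linear statistic s, the jackknife replications are θ̂_(i) = μ + (1/(n−1)) Σ_{j ≠ i} α j, with average θ̂(·) = (1/n) Σ_i θ̂_(i). Then the squared jackknife estimate of standard error, ((n−1)/n) Σ_i (θ̂_(i) − θ̂(·))², equals (1/(n(n−1))) Σ_i (α i − ᾱ)². Consequently the ideal bootstrap variance of the linear statistic, (1/n²) Σ_i (α i − ᾱ)², equals ((n−1)/n) times the squared jackknife estimate of standard error; i.e., for linear statistics the bootstrap standard-error estimate is the jackknife estimate multiplied by √((n−1)/n). -/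
open Finset

/-- For a linear statistic with jackknife replications
`θ̂₍ᵢ₎ = μ + (1/(n−1)) Σ_{j ≠ i} αⱼ`, the squared jackknife estimate of standard
error equals `(1/(n(n−1))) Σᵢ (αᵢ − ᾱ)²`; consequently the ideal bootstrap
variance `(1/n²) Σᵢ (αᵢ − ᾱ)²` is `((n−1)/n)` times the squared jackknife
estimate of standard error. -/
theorem jackknife_vs_bootstrap_linear (n : ℕ) (hn : 2 ≤ n)
    (α : Fin n → ℝ) (μ : ℝ) (αbar : ℝ) (hαbar : αbar = (1 / (n : ℝ)) * ∑ i, α i)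
    (θ : Fin n → ℝ)
    (hθ : ∀ i : Fin n, θ i = μ + (1 / ((n : ℝ) - 1)) * ∑ j ∈ Finset.univ.erase i, α j)
    (θbar : ℝ) (hθbar : θbar = (1 / (n : ℝ)) * ∑ i, θ i) :
    (((n : ℝ) - 1) / n) * ∑ i : Fin n, (θ i - θbar)^2
        = (1 / ((n : ℝ) * ((n : ℝ) - 1))) * ∑ i : Fin n, (α i - αbar)^2 ∧
    (1 / (n : ℝ)^2) * ∑ i : Fin n, (α i - αbar)^2
        = (((n : ℝ) - 1) / n) * ((((n : ℝ) - 1) / n) * ∑ i : Fin n, (θ i - θbar)^2) := by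
  have hn1 : (2:ℝ) ≤ (n:ℝ) := by exact_mod_cast hn
  have hne : ((n:ℝ) - 1) ≠ 0 := by linarith
  have hnne : (n:ℝ) ≠ 0 := by linarith
  set S := ∑ i, α i with hS
  have herase : ∀ i : Fin n, ∑ j ∈ Finset.univ.erase i, α j = S - α i := by
    intro i
    rw [hS, ← Finset.sum_erase_add Finset.univ α (Finset.mem_univ i)]
    ring
  have hθ' : ∀ i : Fin n, θ i = μ + (S - α i) / ((n:ℝ) - 1) := by
    intro i; rw [hθ i, herase i]; ring
  have hθbar' : θbar = μ + S / n := by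
    rw [hθbar]
    have : ∑ i, θ i = ∑ i : Fin n, (μ + (S - α i) / ((n:ℝ) - 1)) := by
      exact Finset.sum_congr rfl (fun i _ => hθ' i)
    rw [this]
    rw [Finset.sum_add_distrib, Finset.sum_const, Finset.card_univ, Fintype.card_fin]
    have h2 : ∑ i : Fin n, (S - α i) / ((n:ℝ) - 1) = ((n:ℝ) * S - S) / ((n:ℝ) - 1) := by
      rw [← Finset.sum_div, Finset.sum_sub_distrib, Finset.sum_const, Finset.card_univ,
        Fintype.card_fin, ← hS]
      ring_nf
    rw [h2]
    field_simp
    ring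
  have key : ∀ i : Fin n, θ i - θbar = -(α i - αbar) / ((n:ℝ) - 1) := by
    intro i
    rw [hθ' i, hθbar', hαbar]
    field_simp
    ring
  have hsum : ∑ i : Fin n, (θ i - θbar)^2
      = (∑ i : Fin n, (α i - αbar)^2) / ((n:ℝ) - 1)^2 := by
    rw [Finset.sum_div]
    refine Finset.sum_congr rfl (fun i _ => ?_)
    rw [key i]
    field_simp
  constructor
  · rw [hsum]; field_simp
  · rw [hsum]; field_simp
end
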